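/- arXiv:2505.07789 — 5 statements merged into one kernel-verified Lean document; each statement's English description precedes it below -/
import Mathlib

section
/- If A = (A,∧,∨,·,1,∼,−) is a complete perfect distributive InFL-algebra, then the map ψ : A → Up(J∞(A), ≼) defined by ψ(a) = {j ∈ J∞(A) : j ≤ a} is an isomorphism from A onto the complex algebra (A_+)^+ of its dual frame A_+; in particular ψ is a lattice isomorphism with ψ(1) = I₁, ψ(a·b) = ψ(a)∘ψ(b), ψ(∼a) = ∼ψ(a), and ψ(−a) = −ψ(a). -/
/-- An involutive FL-algebra (InFL-algebra) structure on a lattice: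
a monoid operation with residuation law (Res) expressed via the two
linear negations `lneg` (∼) and `rneg` (−), which are inverse involutions. -/
structure InFL (A : Type*) [Lattice A] where
  mul : A → A → A
  one : A
  mul_assoc : ∀ a b c : A, mul (mul a b) c = mul a (mul b c)
  one_mul : ∀ a : A, mul one a = a
  mul_one : ∀ a : A, mul a one = a
  lneg : A → A
  rneg : A → A
  res_left : ∀ a b c : A, mul a b ≤ c ↔ a ≤ rneg (mul b (lneg c))
  res_right : ∀ a b c : A, mul a b ≤ c ↔ b ≤ lneg (mul (rneg c) a)
  rneg_lneg : ∀ a : A, rneg (lneg a) = a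
  lneg_rneg : ∀ a : A, lneg (rneg a) = a

/-- The sum operation `a + b := −(∼b · ∼a)` of an InFL-algebra. -/
def InFL.sum {A : Type*} [Lattice A] (S : InFL A) (a b : A) : A :=
  S.rneg (S.mul (S.lneg b) (S.lneg a))

/-- A quasi relation algebra: a De Morgan InFL-algebra satisfying (Dp):
`¬(a·b) = ¬a + ¬b`. -/
structure QRA (A : Type*) [Lattice A] extends InFL A where
  neg : A → A
  neg_neg : ∀ a : A, neg (neg a) = a
  dm : ∀ a b : A, neg (a ⊓ b) = neg a ⊔ neg b
  dp : ∀ a b : A, neg (mul a b) = rneg (mul (lneg (neg b)) (lneg (neg a)))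

/-- Completely join-irreducible element of a complete lattice. -/
def CJI {A : Type*} [CompleteLattice A] (j : A) : Prop :=
  ∀ S : Set A, j = sSup S → j ∈ S

/-- Completely meet-irreducible element of a complete lattice. -/
def CMI {A : Type*} [CompleteLattice A] (m : A) : Prop :=
  ∀ S : Set A, m = sInf S → m ∈ S

/-- A complete lattice is perfect if the completely join-irreducibles are join-dense
and the completely meet-irreducibles are meet-dense. -/
def PerfectLattice (A : Type*) [CompleteLattice A] : Prop :=
  ∀ a : A, a = sSup {j | CJI j ∧ j ≤ a} ∧ a = sInf {m | CMI m ∧ a ≤ m}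

/-- The map `κ(j) = ⋁ {a : j ≰ a}`. -/
def kappa {A : Type*} [CompleteLattice A] (j : A) : A :=
  sSup {a | ¬ j ≤ a}

/-- Extension of a binary set-operation `c : W → W → Set W` to subsets:
`U ∘ V = ⋃ { x ∘ y : x ∈ U, y ∈ V }`. -/
def setComp {W : Type*} (c : W → W → Set W) (U V : Set W) : Set W :=
  {z | ∃ x ∈ U, ∃ y ∈ V, z ∈ c x y}

/-- A DInFL-frame `(W, I, ≼, ∘, ∼, −)`. -/
structure DInFLFrame (W : Type*) where
  I : Set W
  le : W → W → Prop
  le_refl : ∀ x, le x x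
  le_trans : ∀ x y z, le x y → le y z → le x z
  le_antisymm : ∀ x y, le x y → le y x → x = y
  comp : W → W → Set W
  tld : W → W
  mns : W → W
  ax1 : ∀ x y, (le x y ↔ y ∈ setComp comp I {x}) ∧ (le x y ↔ y ∈ setComp comp {x} I)
  ax2 : ∀ x y, le x y → x ∈ I → y ∈ I
  ax3 : ∀ u v x y, le x y → x ∈ comp u v → y ∈ comp u v
  ax4 : ∀ x y z, setComp comp (comp x y) {z} = setComp comp {x} (comp y z)
  ax5 : ∀ x y z, tld z ∈ comp x y ↔ mns y ∈ comp z x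
  ax6 : ∀ x, le (mns (tld x)) x ∧ le (tld (mns x)) x

/-- Upsets of the underlying poset of a DInFL-frame. -/
def DInFLFrame.IsUpset {W : Type*} (F : DInFLFrame W) (U : Set W) : Prop :=
  ∀ x y, F.le x y → x ∈ U → y ∈ U

/-- The operation `∼U = {w : w⁻ ∉ U}` of the complex algebra. -/
def DInFLFrame.sneg {W : Type*} (F : DInFLFrame W) (U : Set W) : Set W :=
  {w | F.mns w ∉ U}

/-- The operation `−U = {w : w^∼ ∉ U}` of the complex algebra. -/
def DInFLFrame.mneg {W : Type*} (F : DInFLFrame W) (U : Set W) : Set W :=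
  {w | F.tld w ∉ U}

/-- The map `ψ(a) = {j ∈ J∞(A) : j ≤ a}`. -/
def psiMap {A : Type*} [CompleteLattice A] (a : A) : Set {a : A // CJI a} :=
  {j | j.1 ≤ a}

/-- Upsets of `(J∞(A), ≼)` where `j ≼ k ⟺ k ≤ j`. -/
def IsJUpset {A : Type*} [CompleteLattice A] (U : Set {a : A // CJI a}) : Prop :=
  ∀ j k : {a : A // CJI a}, k.1 ≤ j.1 → j ∈ U → k ∈ U

/-- Key lemma: in a perfect distributive complete lattice, a completely
join-irreducible element `j` satisfies `j ≰ κ(j)`. -/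
lemma cji_not_le_kappa {A : Type*} [CompleteLattice A]
    (hperf : PerfectLattice A)
    (hdist : ∀ a b c : A, a ⊓ (b ⊔ c) = (a ⊓ b) ⊔ (a ⊓ c))
    {j : A} (hj : CJI j) : ¬ j ≤ kappa j := by
  set s := sSup {b | ∃ a, ¬ j ≤ a ∧ b = a ⊓ j} with hs
  have hsle : s ≤ j := sSup_le (by rintro b ⟨a, _, rfl⟩; exact inf_le_right)
  have hsne : s ≠ j := by
    intro h
    obtain ⟨a, ha, hb⟩ := hj _ h.symm
    exact ha (le_of_eq_of_le hb inf_le_left)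
  -- find a CMI m above s with j ≰ m
  have : ∃ m, CMI m ∧ s ≤ m ∧ ¬ j ≤ m := by
    by_contra h; push_neg at h
    have hjs : j ≤ s := by
      rw [(hperf s).2]
      exact le_sInf (by rintro m ⟨hm, hsm⟩; exact h m hm hsm)
    exact hsne (le_antisymm hsle hjs)
  obtain ⟨m, hm, hsm, hjm⟩ := this
  set m' := sInf {b | ∃ x, ¬ x ≤ m ∧ b = x ⊔ m} with hm'
  have hmm' : m ≤ m' := le_sInf (by rintro b ⟨x, _, rfl⟩; exact le_sup_right)
  have hne : m ≠ m' := by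
    intro h
    obtain ⟨x, hx, hxe⟩ := hm _ h
    exact hx (le_sup_left.trans hxe.ge)
  have key : ∀ a, ¬ j ≤ a → a ≤ m := by
    intro a hja
    by_contra ham
    have h1 : m' ≤ a ⊔ m := sInf_le ⟨a, ham, rfl⟩
    have h2 : m' ≤ j ⊔ m := sInf_le ⟨j, hjm, rfl⟩
    have haj : a ⊓ j ≤ m := (le_sSup ⟨a, hja, rfl⟩ : a ⊓ j ≤ s).trans hsm
    have h3 : (a ⊔ m) ⊓ (j ⊔ m) ≤ m := by
      rw [hdist]
      apply sup_le
      · rw [inf_comm (a ⊔ m) j, hdist]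
        exact sup_le (by rw [inf_comm] at haj; exact haj) inf_le_right
      · exact inf_le_right
    have h4 : (a ⊔ m) ⊓ (j ⊔ m) ≤ m := h3
    have : m' ≤ m := (le_inf h1 h2).trans h4
    exact hne (le_antisymm hmm' this)
  have hk : kappa j ≤ m := sSup_le fun a ha => key a ha
  intro hjk
  exact hjm (hjk.trans hk)

/-- Key lemma: in a perfect distributive complete lattice, completely
join-irreducible elements are completely join-prime. -/
lemma cji_prime {A : Type*} [CompleteLattice A]
    (hperf : PerfectLattice A)
    (hdist : ∀ a b c : A, a ⊓ (b ⊔ c) = (a ⊓ b) ⊔ (a ⊓ c))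
    {j : A} (hj : CJI j) (T : Set A) (h : j ≤ sSup T) : ∃ t ∈ T, j ≤ t := by
  by_contra hc; push_neg at hc
  exact cji_not_le_kappa hperf hdist hj
    (h.trans (sSup_le fun t ht => le_sSup (hc t ht)))

/-- A complete perfect distributive InFL-algebra is isomorphic, via
`ψ(a) = {j ∈ J∞(A) : j ≤ a}`, to the complex algebra `(A₊)⁺` of its dual frame:
`ψ` is a lattice isomorphism onto the upsets of `(J∞(A),≼)` which sends `1` to `I₁`,
`·` to `∘`, `∼` to `∼` and `−` to `−`. -/
theorem perfect_DInFL_iso_complex_algebra {A : Type*} [CompleteLattice A]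
    (S : InFL A) (hperf : PerfectLattice A)
    (hdist : ∀ a b c : A, a ⊓ (b ⊔ c) = (a ⊓ b) ⊔ (a ⊓ c)) :
    (∀ a : A, IsJUpset (psiMap a)) ∧
    Function.Injective (psiMap (A := A)) ∧
    (∀ U, IsJUpset U → ∃ a : A, psiMap a = U) ∧
    (∀ a b : A, a ≤ b ↔ psiMap a ⊆ psiMap b) ∧
    (∀ a b : A, psiMap (a ⊓ b) = psiMap a ∩ psiMap b) ∧
    (∀ a b : A, psiMap (a ⊔ b) = psiMap a ∪ psiMap b) ∧
    psiMap S.one = {i : {a : A // CJI a} | i.1 ≤ S.one} ∧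
    (∀ a b : A, psiMap (S.mul a b) =
      setComp (fun j k => {c : {a : A // CJI a} | c.1 ≤ S.mul j.1 k.1})
        (psiMap a) (psiMap b)) ∧
    (∀ a : A, psiMap (S.lneg a) = {j : {a : A // CJI a} | ¬ S.rneg (kappa j.1) ≤ a}) ∧
    (∀ a : A, psiMap (S.rneg a) = {j : {a : A // CJI a} | ¬ S.lneg (kappa j.1) ≤ a}) := by
  -- monotonicity of multiplication
  have mono_l : ∀ {a a' : A} (b : A), a ≤ a' → S.mul a b ≤ S.mul a' b := by
    intro a a' b h
    have h1 := (S.res_left a' b (S.mul a' b)).mp le_rfl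
    exact (S.res_left a b (S.mul a' b)).mpr (h.trans h1)
  have mono_r : ∀ (a : A) {b b' : A}, b ≤ b' → S.mul a b ≤ S.mul a b' := by
    intro a b b' h
    have h1 := (S.res_right a b' (S.mul a b')).mp le_rfl
    exact (S.res_right a b (S.mul a b')).mpr (h.trans h1)
  -- multiplication distributes over sSup
  have mul_sSup_l : ∀ (T : Set A) (b : A),
      S.mul (sSup T) b = sSup ((fun t => S.mul t b) '' T) := by
    intro T b
    apply le_antisymm
    · exact (S.res_left _ _ _).mpr (sSup_le fun t ht =>
        (S.res_left _ _ _).mp (le_sSup ⟨t, ht, rfl⟩))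
    · exact sSup_le (by rintro x ⟨t, ht, rfl⟩; exact mono_l b (le_sSup ht))
  have mul_sSup_r : ∀ (a : A) (T : Set A),
      S.mul a (sSup T) = sSup ((fun t => S.mul a t) '' T) := by
    intro a T
    apply le_antisymm
    · exact (S.res_right _ _ _).mpr (sSup_le fun t ht =>
        (S.res_right _ _ _).mp (le_sSup ⟨t, ht, rfl⟩))
    · exact sSup_le (by rintro x ⟨t, ht, rfl⟩; exact mono_r a (le_sSup ht))
  -- Galois connection between the two linear negations
  have gal1 : ∀ a b : A, a ≤ S.rneg b ↔ S.mul a b ≤ S.rneg S.one := by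
    intro a b
    have h := S.res_left a b (S.rneg S.one)
    rw [S.lneg_rneg, S.mul_one] at h
    exact h.symm
  have gal2 : ∀ a b : A, b ≤ S.lneg a ↔ S.mul a b ≤ S.lneg S.one := by
    intro a b
    have h := S.res_right a b (S.lneg S.one)
    rw [S.rneg_lneg, S.one_mul] at h
    exact h.symm
  have hz : S.rneg S.one = S.lneg S.one := by
    apply le_antisymm
    · have h := (gal2 (S.rneg S.one) S.one).mp (by rw [S.lneg_rneg])
      rwa [S.mul_one] at h
    · have h := (gal1 S.one (S.lneg S.one)).mp (by rw [S.rneg_lneg])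
      rwa [S.one_mul] at h
  have gal : ∀ a b : A, a ≤ S.rneg b ↔ b ≤ S.lneg a := by
    intro a b; rw [gal1, hz, ← gal2]
  have lneg_anti : ∀ {x y : A}, x ≤ y → S.lneg y ≤ S.lneg x := by
    intro x y h
    exact (gal x (S.lneg y)).mp (by rw [S.rneg_lneg]; exact h)
  have rneg_anti : ∀ {x y : A}, x ≤ y → S.rneg y ≤ S.rneg x := by
    intro x y h
    exact (gal (S.rneg y) x).mpr (by rw [S.lneg_rneg]; exact h)
  have rneg_le_iff : ∀ u v : A, S.rneg u ≤ v ↔ S.lneg v ≤ u := by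
    intro u v
    constructor
    · intro h; have := lneg_anti h; rwa [S.lneg_rneg] at this
    · intro h; have := rneg_anti h; rwa [S.rneg_lneg] at this
  have lneg_le_iff : ∀ u v : A, S.lneg u ≤ v ↔ S.rneg v ≤ u := by
    intro u v
    constructor
    · intro h; have := rneg_anti h; rwa [S.rneg_lneg] at this
    · intro h; have := lneg_anti h; rwa [S.lneg_rneg] at this
  -- κ characterizes ≤ for CJI elements
  have kap : ∀ (j : A), CJI j → ∀ a : A, j ≤ a ↔ ¬ a ≤ kappa j := by
    intro j hj a
    constructor
    · intro h hk; exact cji_not_le_kappa hperf hdist hj (h.trans hk)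
    · intro h; by_contra hja; exact h (le_sSup hja)
  -- order reflection
  have hle : ∀ a b : A, a ≤ b ↔ psiMap a ⊆ psiMap b := by
    intro a b
    constructor
    · intro h j hj; exact le_trans hj h
    · intro h
      calc a = sSup {j | CJI j ∧ j ≤ a} := (hperf a).1
        _ ≤ b := sSup_le fun x hx =>
            h (show (⟨x, hx.1⟩ : {a : A // CJI a}).1 ≤ a from hx.2)
  refine ⟨?_, ?_, ?_, hle, ?_, ?_, rfl, ?_, ?_, ?_⟩
  · -- upsets
    intro a j k hkj hj; exact le_trans hkj hj
  · -- injective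
    intro a b h
    exact le_antisymm ((hle a b).mpr h.le) ((hle b a).mpr h.ge)
  · -- surjective onto upsets
    intro U hU
    refine ⟨sSup (Subtype.val '' U), ?_⟩
    ext k
    simp only [psiMap, Set.mem_setOf_eq]
    constructor
    · intro hk
      obtain ⟨x, hx, hkx⟩ := cji_prime hperf hdist k.2 _ hk
      obtain ⟨j, hjU, rfl⟩ := hx
      exact hU j k hkx hjU
    · intro hk; exact le_sSup ⟨k, hk, rfl⟩
  · -- meets
    intro a b; ext j
    simp only [psiMap, Set.mem_setOf_eq, Set.mem_inter_iff]
    exact le_inf_iff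
  · -- joins
    intro a b; ext j
    simp only [psiMap, Set.mem_setOf_eq, Set.mem_union]
    constructor
    · intro h
      have hj2 : j.1 = (j.1 ⊓ a) ⊔ (j.1 ⊓ b) := by
        rw [← hdist]; exact (inf_eq_left.mpr h).symm
      have hmem := j.2 {j.1 ⊓ a, j.1 ⊓ b} (by rw [sSup_pair]; exact hj2)
      simp only [Set.mem_insert_iff, Set.mem_singleton_iff] at hmem
      rcases hmem with h1 | h1
      · exact Or.inl (le_of_eq_of_le h1 inf_le_right)
      · exact Or.inr (le_of_eq_of_le h1 inf_le_right)
    · rintro (h | h)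
      · exact h.trans le_sup_left
      · exact h.trans le_sup_right
  · -- multiplication
    intro a b; ext c
    constructor
    · intro hc
      have h1 : c.1 ≤ sSup ((fun t => S.mul t b) '' {j | CJI j ∧ j ≤ a}) := by
        rw [← mul_sSup_l, ← (hperf a).1]; exact hc
      obtain ⟨x, hx, hcx⟩ := cji_prime hperf hdist c.2 _ h1
      obtain ⟨j, hja, rfl⟩ := hx
      have h2 : c.1 ≤ sSup ((fun t => S.mul j t) '' {k | CJI k ∧ k ≤ b}) := by
        rw [← mul_sSup_r, ← (hperf b).1]; exact hcx
      obtain ⟨y, hy, hcy⟩ := cji_prime hperf hdist c.2 _ h2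
      obtain ⟨k, hkb, rfl⟩ := hy
      exact ⟨⟨j, hja.1⟩, hja.2, ⟨k, hkb.1⟩, hkb.2, hcy⟩
    · rintro ⟨x, hx, y, hy, hz⟩
      exact le_trans hz ((mono_l _ hx).trans (mono_r a hy))
  · -- lneg
    intro a; ext j
    show j.1 ≤ S.lneg a ↔ ¬ S.rneg (kappa j.1) ≤ a
    rw [kap j.1 j.2 (S.lneg a), rneg_le_iff]
  · -- rneg
    intro a; ext j
    show j.1 ≤ S.rneg a ↔ ¬ S.lneg (kappa j.1) ≤ a
    rw [kap j.1 j.2 (S.rneg a), lneg_le_iff]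
end

section
/- If W = (W, I, ≼, ∘, ∼, −) is a DInFL-frame, then the map x ↦ ↑x = {y ∈ W : x ≼ y} is an isomorphism from W onto the dual frame (W^+)_+ of its complex algebra W^+: it is an order-isomorphism from (W,≼) onto (J∞(W^+), ⊇), and x ∈ I iff ↑x ∈ I_I, z ∈ x∘y iff ↑z ∈ ↑x∘↑y in (W^+)_+, ↑(x^∼) = (↑x)^∼, and ↑(x^−) = (↑x)^−. -/
/-- The principal upset `↑x = {y : x ≼ y}`. -/
def DInFLFrame.up {W : Type*} (F : DInFLFrame W) (x : W) : Set W :=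
  {y | F.le x y}

/-- `U` is a completely join-irreducible element of the complete lattice of
upsets of the frame (where joins of upsets are unions). -/
def DInFLFrame.IsCJIUpset {W : Type*} (F : DInFLFrame W) (U : Set W) : Prop :=
  F.IsUpset U ∧ ∀ 𝒮 : Set (Set W), (∀ V ∈ 𝒮, F.IsUpset V) → U = ⋃₀ 𝒮 → U ∈ 𝒮

/-- `κ(↑x) = ⋃ {U ∈ Up(W) : ↑x ⊄ U}`, computed in the complex algebra. -/
def DInFLFrame.kappaUp {W : Type*} (F : DInFLFrame W) (x : W) : Set W :=
  ⋃₀ {U | F.IsUpset U ∧ ¬ F.up x ⊆ U}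

namespace DInFLFrame

variable {W : Type*} (F : DInFLFrame W)

lemma le_iff_left {x y : W} : F.le x y ↔ ∃ i ∈ F.I, y ∈ F.comp i x := by
  rw [(F.ax1 x y).1]
  constructor
  · rintro ⟨i, hi, b, rfl, h⟩; exact ⟨i, hi, h⟩
  · rintro ⟨i, hi, h⟩; exact ⟨i, hi, x, rfl, h⟩

lemma le_iff_right {x y : W} : F.le x y ↔ ∃ i ∈ F.I, y ∈ F.comp x i := by
  rw [(F.ax1 x y).2]
  constructor
  · rintro ⟨a, rfl, i, hi, h⟩; exact ⟨i, hi, h⟩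
  · rintro ⟨i, hi, h⟩; exact ⟨x, rfl, i, hi, h⟩

lemma mns_tld (x : W) : F.mns (F.tld x) = x := by
  refine F.le_antisymm _ _ (F.ax6 x).1 ?_
  obtain ⟨j, hj, h⟩ := F.le_iff_left.mp (F.le_refl (F.tld x))
  exact F.le_iff_right.mpr ⟨j, hj, (F.ax5 j (F.tld x) x).mp h⟩

lemma tld_mns (x : W) : F.tld (F.mns x) = x := by
  refine F.le_antisymm _ _ (F.ax6 x).2 ?_
  obtain ⟨i, hi, h⟩ := F.le_iff_right.mp (F.le_refl (F.mns x))
  exact F.le_iff_left.mpr ⟨i, hi, (F.ax5 i x (F.mns x)).mpr h⟩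

lemma mns_antitone {x y : W} (h : F.le x y) : F.le (F.mns y) (F.mns x) := by
  obtain ⟨j, hj, hc⟩ := F.le_iff_left.mp h
  rw [← F.tld_mns y] at hc
  exact F.le_iff_right.mpr ⟨j, hj, (F.ax5 j x (F.mns y)).mp hc⟩

lemma tld_antitone {x y : W} (h : F.le x y) : F.le (F.tld y) (F.tld x) := by
  obtain ⟨i, hi, hc⟩ := F.le_iff_right.mp h
  rw [← F.mns_tld y] at hc
  exact F.le_iff_left.mpr ⟨i, hi, (F.ax5 i (F.tld y) x).mpr hc⟩

lemma galois {x w : W} : F.le (F.tld x) w ↔ F.le (F.mns w) x := by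
  constructor
  · intro h
    have h2 := F.mns_antitone h
    rwa [F.mns_tld] at h2
  · intro h
    have h2 := F.tld_antitone h
    rwa [F.tld_mns] at h2

lemma up_isUpset (x : W) : F.IsUpset (F.up x) :=
  fun a b hab ha => F.le_trans x a b ha hab

lemma mem_up_self (x : W) : x ∈ F.up x := F.le_refl x

lemma mem_kappaUp {x w : W} : w ∈ F.kappaUp x ↔ ¬ F.le w x := by
  constructor
  · rintro ⟨U, ⟨hU, hnx⟩, hw⟩ hwx
    exact hnx fun z hz => hU x z hz (hU w x hwx hw)
  · intro h
    exact ⟨F.up w, ⟨F.up_isUpset w,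
      fun hs => h (hs (F.mem_up_self x))⟩, F.mem_up_self w⟩

lemma comp_mono {x y x' y' z : W} (hx : F.le x x') (hy : F.le y y')
    (h : z ∈ F.comp x' y') : z ∈ F.comp x y := by
  obtain ⟨i, hi, hx'⟩ := F.le_iff_left.mp hx
  have h1 : z ∈ setComp F.comp (F.comp i x) {y'} := ⟨x', hx', y', rfl, h⟩
  rw [F.ax4 i x y'] at h1
  obtain ⟨a, ha, w, hw, hz⟩ := h1
  rw [Set.mem_singleton_iff] at ha; subst ha
  have hwz : F.le w z := F.le_iff_left.mpr ⟨a, hi, hz⟩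
  have h2 : z ∈ F.comp x y' := F.ax3 x y' w z hwz hw
  obtain ⟨j, hj, hy'⟩ := F.le_iff_right.mp hy
  have h3 : z ∈ setComp F.comp {x} (F.comp y j) := ⟨x, rfl, y', hy', h2⟩
  rw [← F.ax4 x y j] at h3
  obtain ⟨w', hw', b, hb, hz'⟩ := h3
  rw [Set.mem_singleton_iff] at hb; subst hb
  have hwz' : F.le w' z := F.le_iff_right.mpr ⟨b, hj, hz'⟩
  exact F.ax3 x y w' z hwz' hw'

end DInFLFrame

/-- A DInFL-frame is isomorphic, via `x ↦ ↑x`, to the dual frame `(W⁺)₊` of its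
complex algebra: `x ↦ ↑x` is an order-isomorphism of `(W,≼)` onto
`(J∞(W⁺), ⊇)`, and it preserves `I`, `∘`, `∼` and `−`. -/
theorem frame_iso_dual_of_complex {W : Type*} (F : DInFLFrame W) :
    (∀ x, F.IsCJIUpset (F.up x)) ∧
    (∀ U, F.IsCJIUpset U → ∃ x, U = F.up x) ∧
    Function.Injective F.up ∧
    (∀ x y, F.le x y ↔ F.up y ⊆ F.up x) ∧
    (∀ x, x ∈ F.I ↔ F.up x ⊆ F.I) ∧
    (∀ x y z, z ∈ F.comp x y ↔ F.up z ⊆ setComp F.comp (F.up x) (F.up y)) ∧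
    (∀ x, F.up (F.tld x) = F.sneg (F.kappaUp x)) ∧
    (∀ x, F.up (F.mns x) = F.mneg (F.kappaUp x)) := by
  have hle : ∀ x y, F.le x y ↔ F.up y ⊆ F.up x := by
    intro x y
    constructor
    · intro h z hz
      exact F.le_trans x y z h hz
    · intro h
      exact h (F.mem_up_self y)
  refine ⟨?_, ?_, ?_, hle, ?_, ?_, ?_, ?_⟩
  · -- up x is completely join-irreducible
    intro x
    refine ⟨F.up_isUpset x, ?_⟩
    intro 𝒮 hup hU
    have hx : x ∈ ⋃₀ 𝒮 := hU ▸ F.mem_up_self x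
    obtain ⟨V, hV, hxV⟩ := hx
    have h1 : F.up x ⊆ V := fun z hz => hup V hV x z hz hxV
    have h2 : V ⊆ F.up x := hU ▸ fun z hz => ⟨V, hV, hz⟩
    rwa [← Set.Subset.antisymm h2 h1]
  · -- every CJI upset is a principal upset
    rintro U ⟨hU, hCJI⟩
    have := hCJI {V | ∃ x ∈ U, V = F.up x}
      (by rintro V ⟨x, _, rfl⟩; exact F.up_isUpset x)
      (by
        apply Set.Subset.antisymm
        · intro z hz
          exact ⟨F.up z, ⟨z, hz, rfl⟩, F.mem_up_self z⟩
        · rintro z ⟨V, ⟨x, hx, rfl⟩, hz⟩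
          exact hU x z hz hx)
    obtain ⟨x, _, hx⟩ := this
    exact ⟨x, hx⟩
  · -- injectivity
    intro x y h
    have h1 : F.le x y := (hle x y).mpr (h ▸ Set.Subset.rfl)
    have h2 : F.le y x := (hle y x).mpr (h ▸ Set.Subset.rfl)
    exact F.le_antisymm x y h1 h2
  · -- I
    intro x
    constructor
    · intro hx z hz
      exact F.ax2 x z hz hx
    · intro h
      exact h (F.mem_up_self x)
  · -- comp
    intro x y z
    constructor
    · intro h w hw
      exact ⟨x, F.mem_up_self x, y, F.mem_up_self y, F.ax3 x y z w hw h⟩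
    · intro h
      obtain ⟨x', hx', y', hy', hz⟩ := h (F.mem_up_self z)
      exact F.comp_mono hx' hy' hz
  · -- tld
    intro x
    ext w
    show F.le (F.tld x) w ↔ F.mns w ∉ F.kappaUp x
    rw [F.mem_kappaUp, not_not, F.galois]
  · -- mns
    intro x
    ext w
    show F.le (F.mns x) w ↔ F.tld w ∉ F.kappaUp x
    rw [F.mem_kappaUp, not_not]
    constructor
    · intro h
      have h2 := F.tld_antitone h
      rwa [F.tld_mns] at h2
    · intro h
      have h2 := F.mns_antitone h
      rwa [F.mns_tld] at h2
end

section
/- Let W = (W, I, ≼, ∘, ∼, −, ¬) be a DqRA-frame. Define, for upsets U of (W,≼), ¬U = {x ∈ W : x^¬ ∉ U}. Then the complex algebra W^+ = (Up(W,≼), ∩, ∪, ∘, I, ∼, −, ¬) is a distributive quasi relation algebra: Up(W,≼) is closed under ¬, and ¬ satisfies ¬¬U = U, ¬(U∩V) = ¬U ∪ ¬V (Dm), and ¬(U∘V) = ∼(−¬V ∘ −¬U) (Dp). -/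
/-- A DqRA-frame: a DInFL-frame with a De Morgan operation `ng` (¬) satisfying
(7) `x^{¬¬} = x`, (8) `¬` is order-reversing, and
(9) `z⁻ ∈ x∘y ⟺ z^¬ ∈ y^{∼¬} ∘ x^{∼¬}`. -/
structure DqRAFrame (W : Type*) extends DInFLFrame W where
  ng : W → W
  ax7 : ∀ x, ng (ng x) = x
  ax8 : ∀ x y, le x y → le (ng y) (ng x)
  ax9 : ∀ x y z, mns z ∈ comp x y ↔ ng z ∈ comp (ng (tld y)) (ng (tld x))

/-- The operation `¬U = {x : x^¬ ∉ U}` of the complex algebra of a DqRA-frame. -/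
def DqRAFrame.nneg {W : Type*} (F : DqRAFrame W) (U : Set W) : Set W :=
  {x | F.ng x ∉ U}

lemma DInFLFrame.tld_mns_s9 {W : Type*} (F : DInFLFrame W) (x : W) :
    F.tld (F.mns x) = x := by
  apply F.le_antisymm _ _ ((F.ax6 x).2)
  -- from `mns x ≼ mns x` get `mns x ∈ comp (mns x) e` for some `e ∈ I`
  obtain ⟨a, ha, e, he, hm⟩ := ((F.ax1 (F.mns x) (F.mns x)).2).mp (F.le_refl _)
  rcases ha with rfl
  have h : F.tld (F.mns x) ∈ F.comp e x := (F.ax5 e x (F.mns x)).mpr hm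
  exact ((F.ax1 x (F.tld (F.mns x))).1).mpr ⟨e, he, x, rfl, h⟩

lemma DInFLFrame.mns_tld_s9 {W : Type*} (F : DInFLFrame W) (x : W) :
    F.mns (F.tld x) = x := by
  apply F.le_antisymm _ _ ((F.ax6 x).1)
  obtain ⟨e, he, a, ha, hm⟩ := ((F.ax1 (F.tld x) (F.tld x)).1).mp (F.le_refl _)
  rcases ha with rfl
  have h : F.mns (F.tld x) ∈ F.comp x e := (F.ax5 e (F.tld x) x).mp hm
  exact ((F.ax1 x (F.mns (F.tld x))).2).mpr ⟨x, rfl, e, he, h⟩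

/-- The complex algebra `W⁺ = (Up(W,≼), ∩, ∪, ∘, I, ∼, −, ¬)` of a DqRA-frame is
a distributive quasi relation algebra: upsets are closed under `¬`, and `¬` is
involutive and satisfies (Dm) and (Dp). -/
theorem complex_algebra_is_DqRA {W : Type*} (F : DqRAFrame W) :
    (∀ U, F.toDInFLFrame.IsUpset U → F.toDInFLFrame.IsUpset (F.nneg U)) ∧
    (∀ U, F.toDInFLFrame.IsUpset U → F.nneg (F.nneg U) = U) ∧
    (∀ U V, F.toDInFLFrame.IsUpset U → F.toDInFLFrame.IsUpset V →
      F.nneg (U ∩ V) = F.nneg U ∪ F.nneg V) ∧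
    (∀ U V, F.toDInFLFrame.IsUpset U → F.toDInFLFrame.IsUpset V →
      F.nneg (setComp F.comp U V) =
        F.toDInFLFrame.sneg (setComp F.comp
          (F.toDInFLFrame.mneg (F.nneg V)) (F.toDInFLFrame.mneg (F.nneg U)))) := by
  refine ⟨?_, ?_, ?_, ?_⟩
  · intro U hU x y hxy hx
    intro hy
    exact hx (hU _ _ (F.ax8 _ _ hxy) hy)
  · intro U _
    ext x
    simp [DqRAFrame.nneg, F.ax7]
  · intro U V _ _
    ext x
    simp only [DqRAFrame.nneg, Set.mem_setOf_eq, Set.mem_inter_iff, Set.mem_union]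
    tauto
  · intro U V _ _
    ext x
    simp only [DqRAFrame.nneg, DInFLFrame.sneg, DInFLFrame.mneg, setComp,
      Set.mem_setOf_eq, not_not]
    constructor
    · intro h h'
      apply h
      obtain ⟨a, ha, b, hb, hm⟩ := h'
      refine ⟨F.ng (F.toDInFLFrame.tld b), hb, F.ng (F.toDInFLFrame.tld a), ha, ?_⟩
      exact (F.ax9 a b x).mp hm
    · intro h h'
      apply h
      obtain ⟨u, hu, v, hv, hm⟩ := h'
      refine ⟨F.toDInFLFrame.mns (F.ng v), ?_, F.toDInFLFrame.mns (F.ng u), ?_, ?_⟩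
      · rw [F.toDInFLFrame.tld_mns_s9, F.ax7]; exact hv
      · rw [F.toDInFLFrame.tld_mns_s9, F.ax7]; exact hu
      · apply (F.ax9 _ _ x).mpr
        rw [F.toDInFLFrame.tld_mns_s9, F.toDInFLFrame.tld_mns_s9, F.ax7, F.ax7]
        exact hm
end

section
/- Let A = (A,∧,∨,·,1,∼,−,¬) be a complete perfect distributive quasi relation algebra. Define on J∞(A): I₁ = {i ∈ J∞(A) : i ≤ 1}; a ≼ b iff b ≤ a; c ∈ a∘b iff c ≤ a·b; a^∼ = ∼κ(a); a^− = −κ(a); a^¬ = ¬κ(a). Then A_+ = (J∞(A), I₁, ≼, ∘, ∼, −, ¬) is a DqRA-frame; in particular a^{¬¬} = a, the map a ↦ a^¬ is order-reversing with respect to ≼, and c^− ≤ a·b ⟺ c^¬ ≤ b^{∼¬}·a^{∼¬} for all a,b,c ∈ J∞(A). -/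
section DqRAAux

variable {A : Type*} [CompleteLattice A] (Q : QRA A)

namespace QRA

lemma mul_le_mul {a b c d : A} (h1 : a ≤ b) (h2 : c ≤ d) :
    Q.mul a c ≤ Q.mul b d := by
  have h3 : a ≤ Q.rneg (Q.mul d (Q.lneg (Q.mul b d))) :=
    h1.trans ((Q.res_left b d _).1 le_rfl)
  have h4 : Q.mul a d ≤ Q.mul b d := (Q.res_left a d _).2 h3
  have h5 : c ≤ Q.lneg (Q.mul (Q.rneg (Q.mul b d)) a) :=
    h2.trans ((Q.res_right a d _).1 h4)
  exact (Q.res_right a c _).2 h5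

lemma lneg_antitone {a b : A} (h : a ≤ b) : Q.lneg b ≤ Q.lneg a := by
  have h1 : Q.mul b (Q.lneg b) ≤ Q.lneg Q.one := by
    apply (Q.res_right b (Q.lneg b) (Q.lneg Q.one)).2
    rw [Q.rneg_lneg, Q.one_mul]
  have h2 : Q.mul a (Q.lneg b) ≤ Q.lneg Q.one := (Q.mul_le_mul h le_rfl).trans h1
  have h3 := (Q.res_right a (Q.lneg b) (Q.lneg Q.one)).1 h2
  rwa [Q.rneg_lneg, Q.one_mul] at h3

lemma rneg_antitone {a b : A} (h : a ≤ b) : Q.rneg b ≤ Q.rneg a := by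
  have h1 : Q.mul (Q.rneg b) b ≤ Q.rneg Q.one := by
    apply (Q.res_left (Q.rneg b) b (Q.rneg Q.one)).2
    rw [Q.lneg_rneg, Q.mul_one]
  have h2 : Q.mul (Q.rneg b) a ≤ Q.rneg Q.one := (Q.mul_le_mul le_rfl h).trans h1
  have h3 := (Q.res_left (Q.rneg b) a (Q.rneg Q.one)).1 h2
  rwa [Q.lneg_rneg, Q.mul_one] at h3

lemma g1 {a b : A} : a ≤ Q.lneg b ↔ b ≤ Q.rneg a :=
  ⟨fun h => by have := Q.rneg_antitone h; rwa [Q.rneg_lneg] at this,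
   fun h => by have := Q.lneg_antitone h; rwa [Q.lneg_rneg] at this⟩

lemma g2 {a b : A} : Q.lneg a ≤ b ↔ Q.rneg b ≤ a :=
  ⟨fun h => by have := Q.rneg_antitone h; rwa [Q.rneg_lneg] at this,
   fun h => by have := Q.lneg_antitone h; rwa [Q.lneg_rneg] at this⟩

lemma g3 {a b : A} : Q.rneg a ≤ b ↔ Q.lneg b ≤ a :=
  ⟨fun h => by have := Q.lneg_antitone h; rwa [Q.lneg_rneg] at this,
   fun h => by have := Q.rneg_antitone h; rwa [Q.rneg_lneg] at this⟩

lemma g4 {a b : A} : a ≤ Q.rneg b ↔ b ≤ Q.lneg a :=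
  ⟨fun h => by have := Q.lneg_antitone h; rwa [Q.lneg_rneg] at this,
   fun h => by have := Q.rneg_antitone h; rwa [Q.rneg_lneg] at this⟩

lemma lneg_le_lneg_iff {a b : A} : Q.lneg a ≤ Q.lneg b ↔ b ≤ a :=
  ⟨fun h => by have := Q.rneg_antitone h; rwa [Q.rneg_lneg, Q.rneg_lneg] at this,
   fun h => Q.lneg_antitone h⟩

lemma neg_antitone {a b : A} (h : a ≤ b) : Q.neg b ≤ Q.neg a := by
  have h2 : Q.neg (a ⊓ b) = Q.neg a ⊔ Q.neg b := Q.dm a b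
  rw [inf_eq_left.2 h] at h2
  exact le_sup_right.trans h2.ge

lemma gneg {a b : A} : Q.neg a ≤ b ↔ Q.neg b ≤ a :=
  ⟨fun h => by have := Q.neg_antitone h; rwa [Q.neg_neg] at this,
   fun h => by have := Q.neg_antitone h; rwa [Q.neg_neg] at this⟩

lemma gneg2 {a b : A} : a ≤ Q.neg b ↔ b ≤ Q.neg a :=
  ⟨fun h => by have := Q.neg_antitone h; rwa [Q.neg_neg] at this,
   fun h => by have := Q.neg_antitone h; rwa [Q.neg_neg] at this⟩

lemma mul_sSup_right (x : A) (S : Set A) :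
    Q.mul x (sSup S) = sSup ((fun s => Q.mul x s) '' S) := by
  apply le_antisymm
  · apply (Q.res_right x (sSup S) _).2
    apply sSup_le
    intro s hs
    exact (Q.res_right x s _).1 (le_sSup ⟨s, hs, rfl⟩)
  · apply sSup_le
    rintro _ ⟨s, hs, rfl⟩
    exact Q.mul_le_mul le_rfl (le_sSup hs)

lemma mul_sSup_left (S : Set A) (x : A) :
    Q.mul (sSup S) x = sSup ((fun s => Q.mul s x) '' S) := by
  apply le_antisymm
  · apply (Q.res_left (sSup S) x _).2
    apply sSup_le
    intro s hs
    exact (Q.res_left s x _).1 (le_sSup ⟨s, hs, rfl⟩)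
  · apply sSup_le
    rintro _ ⟨s, hs, rfl⟩
    exact Q.mul_le_mul (le_sSup hs) le_rfl

lemma lneg_mul (a b : A) :
    Q.lneg (Q.mul a b) =
      Q.rneg (Q.mul (Q.lneg (Q.lneg a)) (Q.lneg (Q.lneg b))) := by
  have key : ∀ c : A, c ≤ Q.rneg (Q.mul (Q.lneg (Q.lneg a)) (Q.lneg (Q.lneg b))) ↔
      c ≤ Q.lneg (Q.mul a b) := by
    intro c
    rw [Q.g4, Q.res_right, Q.rneg_lneg, Q.lneg_le_lneg_iff, Q.res_right, Q.rneg_lneg,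
      Q.lneg_le_lneg_iff, Q.res_right, Q.rneg_lneg]
  exact le_antisymm ((key _).2 le_rfl) ((key _).1 le_rfl)

end QRA

lemma kappa_mono {A : Type*} [CompleteLattice A] {a b : A} (h : b ≤ a) :
    kappa b ≤ kappa a :=
  sSup_le fun x hx => le_sSup (fun hax => hx (h.trans hax))

lemma cmi_meet_prime {A : Type*} [CompleteLattice A]
    (hdist : ∀ a b c : A, a ⊓ (b ⊔ c) = (a ⊓ b) ⊔ (a ⊓ c))
    {m : A} (hm : CMI m) {x y : A} (h : x ⊓ y ≤ m) : x ≤ m ∨ y ≤ m := by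
  have key : (m ⊔ x) ⊓ (m ⊔ y) = m := by
    calc (m ⊔ x) ⊓ (m ⊔ y) = ((m ⊔ x) ⊓ m) ⊔ ((m ⊔ x) ⊓ y) := hdist _ _ _
    _ = m ⊔ (y ⊓ (m ⊔ x)) := by rw [inf_eq_right.2 le_sup_left, inf_comm]
    _ = m ⊔ ((y ⊓ m) ⊔ (y ⊓ x)) := by rw [hdist]
    _ = (m ⊔ (y ⊓ m)) ⊔ (y ⊓ x) := (sup_assoc _ _ _).symm
    _ = m ⊔ (y ⊓ x) := by rw [sup_eq_left.2 (inf_le_right : y ⊓ m ≤ m)]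
    _ = m := sup_eq_left.2 (le_trans (by rw [inf_comm]; exact h) le_rfl)
  have hmem := hm {m ⊔ x, m ⊔ y} (by rw [sInf_pair]; exact key.symm)
  rcases hmem with h1 | h1
  · exact Or.inl (sup_eq_left.1 h1.symm)
  · exact Or.inr (sup_eq_left.1 h1.symm)

lemma not_le_kappa {A : Type*} [CompleteLattice A] (hperf : PerfectLattice A)
    (hdist : ∀ a b c : A, a ⊓ (b ⊔ c) = (a ⊓ b) ⊔ (a ⊓ c))
    {a : A} (ha : CJI a) : ¬ a ≤ kappa a := by
  intro hle
  have hs_le : sSup {x : A | x < a} ≤ a := sSup_le fun x hx => hx.le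
  have hns : ¬ a ≤ sSup {x : A | x < a} := fun h =>
    lt_irrefl a (ha {x : A | x < a} (le_antisymm h hs_le))
  obtain ⟨m, hmem, ham⟩ :
      ∃ m, (CMI m ∧ sSup {x : A | x < a} ≤ m) ∧ ¬ a ≤ m := by
    by_contra hc
    push_neg at hc
    apply hns
    rw [(hperf (sSup {x : A | x < a})).2]
    exact le_sInf fun m hm => hc m hm
  have hk : kappa a ≤ m := by
    apply sSup_le
    intro x hx
    have hlt : a ⊓ x < a := lt_of_le_of_ne inf_le_left
      (fun he => hx (le_of_eq he.symm |>.trans inf_le_right))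
    have h1 : x ⊓ a ≤ m := by
      rw [inf_comm]
      exact le_trans (le_sSup (show a ⊓ x ∈ {x : A | x < a} from hlt)) hmem.2
    rcases cmi_meet_prime hdist hmem.1 h1 with h | h
    · exact h
    · exact absurd h ham
  exact ham (hle.trans hk)

lemma kappa_split {A : Type*} [CompleteLattice A] (hperf : PerfectLattice A)
    (hdist : ∀ a b c : A, a ⊓ (b ⊔ c) = (a ⊓ b) ⊔ (a ⊓ c))
    {a : A} (ha : CJI a) (x : A) : ¬ a ≤ x ↔ x ≤ kappa a :=
  ⟨fun h => le_sSup h, fun h hax => not_le_kappa hperf hdist ha (hax.trans h)⟩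

lemma cji_sSup_prime {A : Type*} [CompleteLattice A] (hperf : PerfectLattice A)
    (hdist : ∀ a b c : A, a ⊓ (b ⊔ c) = (a ⊓ b) ⊔ (a ⊓ c))
    {a : A} (ha : CJI a) {S : Set A} (h : a ≤ sSup S) : ∃ s ∈ S, a ≤ s := by
  by_contra hc
  push_neg at hc
  exact not_le_kappa hperf hdist ha
    (h.trans (sSup_le fun s hs => (kappa_split hperf hdist ha s).1 (hc s hs)))

lemma cji_of_split {A : Type*} [CompleteLattice A] {j t : A}
    (h : ∀ x, ¬ j ≤ x ↔ x ≤ t) : CJI j := by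
  intro S hS
  by_cases he : ∃ s ∈ S, j ≤ s
  · obtain ⟨s, hsS, hjs⟩ := he
    have hjeq : j = s := le_antisymm hjs (by rw [hS]; exact le_sSup hsS)
    exact hjeq.symm ▸ hsS
  · push_neg at he
    have hjt : j ≤ t := by
      rw [hS]
      exact sSup_le fun s hs => (h s).1 (he s hs)
    exact absurd hjt ((h t).2 le_rfl)

lemma kappa_eq_of_split {A : Type*} [CompleteLattice A] {j t : A}
    (h : ∀ x, ¬ j ≤ x ↔ x ≤ t) : kappa j = t :=
  le_antisymm (sSup_le fun x hx => (h x).1 hx) (le_sSup ((h t).2 le_rfl))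

end DqRAAux

/-- The dual structure `A₊ = (J∞(A), I₁, ≼, ∘, ∼, −, ¬)` of a complete perfect
distributive quasi relation algebra is a DqRA-frame, with `a^¬ = ¬κ(a)`; in
particular `a^{¬¬} = a`, `¬` is order-reversing w.r.t. `≼`, and
`c^− ≤ a·b ⟺ c^¬ ≤ b^{∼¬}·a^{∼¬}` for completely join-irreducible `a,b,c`. -/
theorem dual_frame_of_perfect_DqRA {A : Type*} [CompleteLattice A]
    (Q : QRA A) (hperf : PerfectLattice A)
    (hdist : ∀ a b c : A, a ⊓ (b ⊔ c) = (a ⊓ b) ⊔ (a ⊓ c)) :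
    (∃ F : DqRAFrame {a : A // CJI a},
      F.I = {i | i.1 ≤ Q.one} ∧
      (∀ a b, F.le a b ↔ b.1 ≤ a.1) ∧
      (∀ a b c, c ∈ F.comp a b ↔ c.1 ≤ Q.mul a.1 b.1) ∧
      (∀ a, (F.tld a).1 = Q.lneg (kappa a.1)) ∧
      (∀ a, (F.mns a).1 = Q.rneg (kappa a.1)) ∧
      (∀ a, (F.ng a).1 = Q.neg (kappa a.1))) ∧
    (∀ a : A, CJI a → Q.neg (kappa (Q.neg (kappa a))) = a) ∧
    (∀ a b : A, CJI a → CJI b → b ≤ a → Q.neg (kappa a) ≤ Q.neg (kappa b)) ∧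
    (∀ a b c : A, CJI a → CJI b → CJI c →
      (Q.rneg (kappa c) ≤ Q.mul a b ↔
        Q.neg (kappa c) ≤
          Q.mul (Q.neg (kappa (Q.lneg (kappa b)))) (Q.neg (kappa (Q.lneg (kappa a)))))) := by
    classical
  have hsplit : ∀ a : A, CJI a → ∀ x : A, ¬ a ≤ x ↔ x ≤ kappa a :=
    fun a ha x => kappa_split hperf hdist ha x
  have hsl : ∀ a : A, CJI a → ∀ x : A, ¬ Q.lneg (kappa a) ≤ x ↔ x ≤ Q.lneg a := by
    intro a ha x
    have h1 : Q.lneg (kappa a) ≤ x ↔ ¬ a ≤ Q.rneg x :=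
      Q.g2.trans (hsplit a ha (Q.rneg x)).symm
    rw [h1, not_not, Q.g4]
  have hsm : ∀ a : A, CJI a → ∀ x : A, ¬ Q.rneg (kappa a) ≤ x ↔ x ≤ Q.rneg a := by
    intro a ha x
    have h1 : Q.rneg (kappa a) ≤ x ↔ ¬ a ≤ Q.lneg x :=
      Q.g3.trans (hsplit a ha (Q.lneg x)).symm
    rw [h1, not_not, Q.g1]
  have hsn : ∀ a : A, CJI a → ∀ x : A, ¬ Q.neg (kappa a) ≤ x ↔ x ≤ Q.neg a := by
    intro a ha x
    have h1 : Q.neg (kappa a) ≤ x ↔ ¬ a ≤ Q.neg x :=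
      Q.gneg.trans (hsplit a ha (Q.neg x)).symm
    rw [h1, not_not, Q.gneg2]
  have hcl : ∀ a : A, CJI a → CJI (Q.lneg (kappa a)) :=
    fun a ha => cji_of_split (hsl a ha)
  have hcm : ∀ a : A, CJI a → CJI (Q.rneg (kappa a)) :=
    fun a ha => cji_of_split (hsm a ha)
  have hcn : ∀ a : A, CJI a → CJI (Q.neg (kappa a)) :=
    fun a ha => cji_of_split (hsn a ha)
  have hkl : ∀ a : A, CJI a → kappa (Q.lneg (kappa a)) = Q.lneg a :=
    fun a ha => kappa_eq_of_split (hsl a ha)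
  have hkm : ∀ a : A, CJI a → kappa (Q.rneg (kappa a)) = Q.rneg a :=
    fun a ha => kappa_eq_of_split (hsm a ha)
  have hkn : ∀ a : A, CJI a → kappa (Q.neg (kappa a)) = Q.neg a :=
    fun a ha => kappa_eq_of_split (hsn a ha)
  have goal2 : ∀ a : A, CJI a → Q.neg (kappa (Q.neg (kappa a))) = a := by
    intro a ha
    rw [hkn a ha, Q.neg_neg]
  have goal3 : ∀ a b : A, CJI a → CJI b → b ≤ a →
      Q.neg (kappa a) ≤ Q.neg (kappa b) :=
    fun a b _ _ h => Q.neg_antitone (kappa_mono h)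
  have goal4 : ∀ a b c : A, CJI a → CJI b → CJI c →
      (Q.rneg (kappa c) ≤ Q.mul a b ↔
        Q.neg (kappa c) ≤
          Q.mul (Q.neg (kappa (Q.lneg (kappa b)))) (Q.neg (kappa (Q.lneg (kappa a))))) := by
    intro a b c ha hb _
    rw [hkl b hb, hkl a ha, Q.g3, Q.gneg, Q.dp, Q.neg_neg, Q.neg_neg, Q.lneg_mul]
  have hmul_left : ∀ c x t : A, CJI c → c ≤ Q.mul t x →
      ∃ p : A, CJI p ∧ p ≤ t ∧ c ≤ Q.mul p x := by
    intro c x t hc h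
    rw [(hperf t).1, Q.mul_sSup_left] at h
    obtain ⟨s, hs, hcp⟩ := cji_sSup_prime hperf hdist hc h
    obtain ⟨p, hp, rfl⟩ := hs
    exact ⟨p, hp.1, hp.2, hcp⟩
  have hmul_right : ∀ c x t : A, CJI c → c ≤ Q.mul x t →
      ∃ q : A, CJI q ∧ q ≤ t ∧ c ≤ Q.mul x q := by
    intro c x t hc h
    rw [(hperf t).1, Q.mul_sSup_right] at h
    obtain ⟨s, hs, hcp⟩ := cji_sSup_prime hperf hdist hc h
    obtain ⟨q, hq, rfl⟩ := hs
    exact ⟨q, hq.1, hq.2, hcp⟩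
  refine ⟨⟨{ I := {i | i.1 ≤ Q.one},
             le := fun a b => b.1 ≤ a.1,
             le_refl := fun x => le_rfl,
             le_trans := fun x y z h1 h2 => h2.trans h1,
             le_antisymm := fun x y h1 h2 => Subtype.ext (le_antisymm h2 h1),
             comp := fun a b => {c | c.1 ≤ Q.mul a.1 b.1},
             tld := fun a => ⟨Q.lneg (kappa a.1), hcl a.1 a.2⟩,
             mns := fun a => ⟨Q.rneg (kappa a.1), hcm a.1 a.2⟩,
             ng := fun a => ⟨Q.neg (kappa a.1), hcn a.1 a.2⟩,
             ax1 := ?_,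
             ax2 := fun x y hxy hx => hxy.trans hx,
             ax3 := fun u v x y hxy hx => hxy.trans hx,
             ax4 := ?_,
             ax5 := ?_,
             ax6 := ?_,
             ax7 := ?_,
             ax8 := ?_,
             ax9 := ?_ }, rfl, fun a b => Iff.rfl, fun a b c => Iff.rfl,
             fun a => rfl, fun a => rfl, fun a => rfl⟩, goal2, goal3, goal4⟩
  · -- ax1
    intro x y
    constructor
    · constructor
      · intro h
        obtain ⟨p, hp, hp1, hyp⟩ := hmul_left y.1 x.1 Q.one y.2
          (by rw [Q.one_mul]; exact h)
        exact ⟨⟨p, hp⟩, hp1, x, rfl, hyp⟩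
      · rintro ⟨i, hi, x', rfl, hyc⟩
        have h2 : Q.mul i.1 x'.1 ≤ Q.mul Q.one x'.1 := Q.mul_le_mul hi le_rfl
        rw [Q.one_mul] at h2
        exact hyc.trans h2
    · constructor
      · intro h
        obtain ⟨q, hq, hq1, hyq⟩ := hmul_right y.1 x.1 Q.one y.2
          (by rw [Q.mul_one]; exact h)
        exact ⟨x, rfl, ⟨q, hq⟩, hq1, hyq⟩
      · rintro ⟨x', rfl, i, hi, hyc⟩
        have h2 : Q.mul x'.1 i.1 ≤ Q.mul x'.1 Q.one := Q.mul_le_mul le_rfl hi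
        rw [Q.mul_one] at h2
        exact hyc.trans h2
  · -- ax4
    intro x y z
    ext w
    simp only [setComp, Set.mem_setOf_eq, Set.mem_singleton_iff]
    constructor
    · rintro ⟨p, hp, z', rfl, hw⟩
      have h1 : w.1 ≤ Q.mul (Q.mul x.1 y.1) z'.1 := hw.trans (Q.mul_le_mul hp le_rfl)
      rw [Q.mul_assoc] at h1
      obtain ⟨q, hq, hq1, hwq⟩ := hmul_right w.1 x.1 (Q.mul y.1 z'.1) w.2 h1
      exact ⟨x, rfl, ⟨q, hq⟩, hq1, hwq⟩
    · rintro ⟨x', rfl, q, hq, hw⟩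
      have h1 : w.1 ≤ Q.mul (Q.mul x'.1 y.1) z.1 := by
        rw [Q.mul_assoc]
        exact hw.trans (Q.mul_le_mul le_rfl hq)
      obtain ⟨p, hp, hp1, hwp⟩ := hmul_left w.1 z.1 (Q.mul x'.1 y.1) w.2 h1
      exact ⟨⟨p, hp⟩, hp1, z, rfl, hwp⟩
  · -- ax5
    intro x y z
    show Q.lneg (kappa z.1) ≤ Q.mul x.1 y.1 ↔ Q.rneg (kappa y.1) ≤ Q.mul z.1 x.1
    rw [Q.g2, ← hsplit z.1 z.2, Q.g3, ← hsplit y.1 y.2, not_iff_not, Q.g1,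
      Q.res_left, Q.lneg_rneg]
  · -- ax6
    intro x
    constructor
    · show x.1 ≤ Q.rneg (kappa (Q.lneg (kappa x.1)))
      rw [hkl x.1 x.2, Q.rneg_lneg]
    · show x.1 ≤ Q.lneg (kappa (Q.rneg (kappa x.1)))
      rw [hkm x.1 x.2, Q.lneg_rneg]
  · -- ax7
    intro x
    exact Subtype.ext (goal2 x.1 x.2)
  · -- ax8
    intro x y h
    exact goal3 x.1 y.1 x.2 y.2 h
  · -- ax9
    intro x y z
    exact goal4 x.1 y.1 z.1 x.2 y.2 z.2
end

section
/- Let A = (A,∧,∨,·,1,∼,−) be a distributive InFL-algebra and let W_A be the set of generalised prime filters of the lattice reduct of A. For F, G ∈ W_A define: F ∈ 𝓘 iff 1 ∈ F; F ≼ G iff F ⊆ G; F∙G = {H ∈ W_A : F·G ⊆ H} where F·G = {a·b : a ∈ F, b ∈ G}; F^∼ = {∼a : a ∉ F}; F^− = {−a : a ∉ F}. Then 𝔉(A) = (W_A, 𝓘, ≼, ∙, ∼, −, ∅, A) is a doubly-pointed DInFL-frame: (W_A, 𝓘, ≼, ∙, ∼, −) is a DInFL-frame, the poset (W_A, ⊆)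 is bounded with least element ∅ and greatest element A, and 𝓘 is a proper non-empty upset. -/
/-- A generalised prime filter of a lattice: a prime filter (a nonempty proper
upward-closed subset closed under meets whose complement is closed under
joins), or the whole lattice, or the empty set. -/
def IsGPF {A : Type*} [Lattice A] (F : Set A) : Prop :=
  F = Set.univ ∨ F = ∅ ∨
    (F.Nonempty ∧ F ≠ Set.univ ∧
     (∀ a b : A, a ∈ F → a ≤ b → b ∈ F) ∧
     (∀ a b : A, a ∈ F → b ∈ F → a ⊓ b ∈ F) ∧
     (∀ a b : A, a ⊔ b ∈ F → a ∈ F ∨ b ∈ F))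

namespace InFL
variable {A : Type*} [Lattice A] (S : InFL A)

lemma le_iff_lneg' (a b : A) : S.mul a b ≤ S.lneg S.one ↔ b ≤ S.lneg a := by
  have h := S.res_right a b (S.lneg S.one)
  rwa [S.rneg_lneg, S.one_mul] at h

lemma le_iff_rneg' (a b : A) : S.mul a b ≤ S.rneg S.one ↔ a ≤ S.rneg b := by
  have h := S.res_left a b (S.rneg S.one)
  rwa [S.lneg_rneg, S.mul_one] at h

lemma zero_eq : S.lneg S.one = S.rneg S.one := by
  have h1 : S.rneg S.one ≤ S.lneg S.one := by
    have h := (S.le_iff_lneg' (S.rneg S.one) S.one).2 (S.lneg_rneg S.one).ge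
    rwa [S.mul_one] at h
  have h2 : S.lneg S.one ≤ S.rneg S.one := by
    have h := (S.le_iff_rneg' S.one (S.lneg S.one)).2 (S.rneg_lneg S.one).ge
    rwa [S.one_mul] at h
  exact le_antisymm h2 h1

lemma galois (a b : A) : a ≤ S.rneg b ↔ b ≤ S.lneg a := by
  rw [← S.le_iff_rneg', ← S.zero_eq, S.le_iff_lneg']

lemma lneg_le_lneg {a b : A} (h : a ≤ b) : S.lneg b ≤ S.lneg a := by
  have h2 := (S.galois a (S.lneg b)).1
  rw [S.rneg_lneg] at h2
  exact h2 h

lemma rneg_le_rneg {a b : A} (h : a ≤ b) : S.rneg b ≤ S.rneg a := by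
  have h2 := (S.galois (S.rneg b) a).2
  rw [S.lneg_rneg] at h2
  exact h2 h

lemma rneg_le_iff (x y : A) : S.rneg x ≤ y ↔ S.lneg y ≤ x :=
  ⟨fun h => (S.lneg_le_lneg h).trans (S.lneg_rneg x).le,
   fun h => (S.rneg_le_rneg h).trans (S.rneg_lneg y).le⟩

lemma lneg_le_iff (x y : A) : S.lneg x ≤ y ↔ S.rneg y ≤ x :=
  ⟨fun h => (S.rneg_le_rneg h).trans (S.rneg_lneg x).le,
   fun h => (S.lneg_le_lneg h).trans (S.lneg_rneg y).le⟩

lemma rneg_inf (a b : A) : S.rneg (a ⊓ b) = S.rneg a ⊔ S.rneg b := by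
  refine le_antisymm ?_ (sup_le (S.rneg_le_rneg inf_le_left) (S.rneg_le_rneg inf_le_right))
  rw [S.rneg_le_iff]
  exact le_inf ((S.lneg_le_lneg le_sup_left).trans (S.lneg_rneg a).le)
    ((S.lneg_le_lneg le_sup_right).trans (S.lneg_rneg b).le)

lemma rneg_sup (a b : A) : S.rneg (a ⊔ b) = S.rneg a ⊓ S.rneg b := by
  refine le_antisymm (le_inf (S.rneg_le_rneg le_sup_left) (S.rneg_le_rneg le_sup_right)) ?_
  rw [S.galois]
  exact sup_le ((S.lneg_rneg a).symm.le.trans (S.lneg_le_lneg inf_le_left))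
    ((S.lneg_rneg b).symm.le.trans (S.lneg_le_lneg inf_le_right))

lemma lneg_inf (a b : A) : S.lneg (a ⊓ b) = S.lneg a ⊔ S.lneg b := by
  refine le_antisymm ?_ (sup_le (S.lneg_le_lneg inf_le_left) (S.lneg_le_lneg inf_le_right))
  rw [S.lneg_le_iff]
  exact le_inf ((S.rneg_le_rneg le_sup_left).trans (S.rneg_lneg a).le)
    ((S.rneg_le_rneg le_sup_right).trans (S.rneg_lneg b).le)

lemma lneg_sup (a b : A) : S.lneg (a ⊔ b) = S.lneg a ⊓ S.lneg b := by
  refine le_antisymm (le_inf (S.lneg_le_lneg le_sup_left) (S.lneg_le_lneg le_sup_right)) ?_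
  rw [← S.galois]
  exact sup_le ((S.rneg_lneg a).symm.le.trans (S.rneg_le_rneg inf_le_left))
    ((S.rneg_lneg b).symm.le.trans (S.rneg_le_rneg inf_le_right))

lemma mul_le_mul {a a' b b' : A} (h1 : a ≤ a') (h2 : b ≤ b') :
    S.mul a b ≤ S.mul a' b' := by
  have s1 : S.mul a b ≤ S.mul a' b :=
    (S.res_left a b (S.mul a' b)).2 (h1.trans ((S.res_left a' b (S.mul a' b)).1 le_rfl))
  have s2 : S.mul a' b ≤ S.mul a' b' :=
    (S.res_right a' b (S.mul a' b')).2 (h2.trans ((S.res_right a' b' (S.mul a' b')).1 le_rfl))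
  exact s1.trans s2

lemma mul_sup_right (a b c : A) : S.mul a (b ⊔ c) = S.mul a b ⊔ S.mul a c := by
  refine le_antisymm ?_ (sup_le (S.mul_le_mul le_rfl le_sup_left) (S.mul_le_mul le_rfl le_sup_right))
  exact (S.res_right a (b ⊔ c) _).2 (sup_le ((S.res_right a b _).1 le_sup_left)
    ((S.res_right a c _).1 le_sup_right))

lemma mul_sup_left (a b c : A) : S.mul (a ⊔ b) c = S.mul a c ⊔ S.mul b c := by
  refine le_antisymm ?_ (sup_le (S.mul_le_mul le_sup_left le_rfl) (S.mul_le_mul le_sup_right le_rfl))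
  exact (S.res_left (a ⊔ b) c _).2 (sup_le ((S.res_left a c _).1 le_sup_left)
    ((S.res_left b c _).1 le_sup_right))

end InFL

section GPFHelp
variable {A : Type*} [Lattice A]


lemma gpf_univ : IsGPF (Set.univ : Set A) := Or.inl rfl
lemma gpf_empty : IsGPF (∅ : Set A) := Or.inr (Or.inl rfl)

lemma IsGPF.up {F : Set A} (h : IsGPF F) {a b : A} (ha : a ∈ F) (hab : a ≤ b) : b ∈ F := by
  rcases h with h | h | h
  · rw [h]; trivial
  · rw [h] at ha; exact ha.elim
  · exact h.2.2.1 a b ha hab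

lemma IsGPF.inf_mem {F : Set A} (h : IsGPF F) {a b : A} (ha : a ∈ F) (hb : b ∈ F) :
    a ⊓ b ∈ F := by
  rcases h with h | h | h
  · rw [h]; trivial
  · rw [h] at ha; exact ha.elim
  · exact h.2.2.2.1 a b ha hb

lemma IsGPF.prime {F : Set A} (h : IsGPF F) {a b : A} (hab : a ⊔ b ∈ F) :
    a ∈ F ∨ b ∈ F := by
  rcases h with h | h | h
  · rw [h]; left; trivial
  · rw [h] at hab; exact hab.elim
  · exact h.2.2.2.2 a b hab

/-- Prime filter separation in a distributive lattice (Zorn). -/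
lemma exists_gpf_between {A : Type*} [DistribLattice A] {P N : Set A}
    (hPn : P.Nonempty)
    (hPinf : ∀ a b, a ∈ P → b ∈ P → a ⊓ b ∈ P)
    (hPN : P ⊆ N)
    (hNup : ∀ a b, a ∈ N → a ≤ b → b ∈ N)
    (hNjoin : ∀ a b, a ∉ N → b ∉ N → a ⊔ b ∉ N) :
    ∃ H : Set A, IsGPF H ∧ P ⊆ H ∧ H ⊆ N := by
  by_cases hNc : Nᶜ.Nonempty
  · set S : Set (Set A) := {J | Nᶜ ⊆ J ∧ (∀ a b : A, a ∈ J → b ≤ a → b ∈ J) ∧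
      (∀ a b : A, a ∈ J → b ∈ J → a ⊔ b ∈ J) ∧ J ∩ P = ∅} with hS
    have hNS : Nᶜ ∈ S := by
      refine ⟨subset_rfl, fun a b ha hba hb => ha (hNup b a hb hba),
        fun a b ha hb => hNjoin a b ha hb, ?_⟩
      ext x; simp only [Set.mem_inter_iff, Set.mem_compl_iff, Set.mem_empty_iff_false, iff_false,
        not_and]
      exact fun hx hp => (hx (hPN hp)).elim
    have hchainub : ∀ c ⊆ S, IsChain (· ⊆ ·) c → c.Nonempty → ∃ ub ∈ S, ∀ s ∈ c, s ⊆ ub := by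
      intro c hcS hchain hcne
      refine ⟨⋃₀ c, ⟨?_, ?_, ?_, ?_⟩, fun s hs => Set.subset_sUnion_of_mem hs⟩
      · obtain ⟨s, hs⟩ := hcne
        exact (hcS hs).1.trans (Set.subset_sUnion_of_mem hs)
      · rintro a b ⟨s, hs, has⟩ hba
        exact ⟨s, hs, (hcS hs).2.1 a b has hba⟩
      · rintro a b ⟨s, hs, has⟩ ⟨t, ht, hbt⟩
        rcases hchain.total hs ht with hst | hts
        · exact ⟨t, ht, (hcS ht).2.2.1 a b (hst has) hbt⟩
        · exact ⟨s, hs, (hcS hs).2.2.1 a b has (hts hbt)⟩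
      · ext x
        simp only [Set.mem_inter_iff, Set.mem_sUnion, Set.mem_empty_iff_false, iff_false, not_and]
        rintro ⟨s, hs, hxs⟩ hxP
        have := (hcS hs).2.2.2
        exact absurd (Set.mem_inter hxs hxP) (by rw [this]; exact id)
    obtain ⟨m, hNm, hmax⟩ := zorn_subset_nonempty S hchainub Nᶜ hNS
    obtain ⟨hNcm, hmdown, hmjoin, hmP⟩ := hmax.1
    have hmP' : ∀ x, x ∈ m → x ∉ P := by
      intro x hx hp
      exact absurd (Set.mem_inter hx hp) (by rw [hmP]; exact id)
    -- m is a prime ideal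
    have hprime : ∀ a b : A, a ⊓ b ∈ m → a ∈ m ∨ b ∈ m := by
      intro a b hab
      by_contra hcon
      push_neg at hcon
      obtain ⟨ham, hbm⟩ := hcon
      have key : ∀ x : A, x ∉ m → x ⊓ (a ⊓ b) ∈ m →
          ∃ p ∈ P, ∃ j ∈ m, p ≤ j ⊔ x := by
        intro x hxm hxin
        set mx : Set A := {w | ∃ j ∈ m, w ≤ j ⊔ x} with hmx
        have hmmx : m ⊆ mx := fun w hw => ⟨w, hw, le_sup_left⟩
        have hxmx : x ∈ mx := ⟨x ⊓ (a ⊓ b), hxin, le_sup_right⟩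
        have hne : mx ≠ m := fun h => hxm (h ▸ hxmx)
        have hnotS : mx ∉ S := by
          intro hmem
          exact hne (subset_antisymm (hmax.2 hmem hmmx) hmmx)
        rw [hS] at hnotS
        simp only [Set.mem_setOf_eq, not_and] at hnotS
        have h1 : Nᶜ ⊆ mx := hNcm.trans hmmx
        have h2 : ∀ u v : A, u ∈ mx → v ≤ u → v ∈ mx := by
          rintro u v ⟨j, hj, hju⟩ hvu
          exact ⟨j, hj, hvu.trans hju⟩
        have h3 : ∀ u v : A, u ∈ mx → v ∈ mx → u ⊔ v ∈ mx := by
          rintro u v ⟨j, hj, hju⟩ ⟨j', hj', hjv⟩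
          exact ⟨j ⊔ j', hmjoin j j' hj hj',
            sup_le (hju.trans (sup_le_sup_right le_sup_left x))
              (hjv.trans (sup_le_sup_right le_sup_right x))⟩
        have h4 := hnotS h1 h2 h3
        have : (mx ∩ P).Nonempty := by
          rw [Set.nonempty_iff_ne_empty]; exact h4
        obtain ⟨p, ⟨j, hj, hpj⟩, hpP⟩ := this
        exact ⟨p, hpP, j, hj, hpj⟩
      obtain ⟨p, hpP, j, hj, hpj⟩ := key a ham (by
        exact hmdown _ _ hab inf_le_right)
      obtain ⟨q, hqP, j', hj', hqj⟩ := key b hbm (by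
        exact hmdown _ _ hab inf_le_right)
      have hpq : p ⊓ q ∈ P := hPinf p q hpP hqP
      have hle : p ⊓ q ≤ (j ⊔ j') ⊔ a ⊓ b := by
        calc p ⊓ q ≤ (j ⊔ a) ⊓ (j' ⊔ b) := inf_le_inf hpj hqj
        _ = (j ⊓ (j' ⊔ b)) ⊔ (a ⊓ (j' ⊔ b)) := inf_sup_right _ _ _
        _ = (j ⊓ (j' ⊔ b)) ⊔ ((a ⊓ j') ⊔ (a ⊓ b)) := by rw [inf_sup_left a j' b]
        _ ≤ (j ⊔ j') ⊔ a ⊓ b := by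
            refine sup_le (inf_le_left.trans (le_sup_of_le_left le_sup_left)) (sup_le ?_ le_sup_right)
            exact inf_le_right.trans (le_sup_of_le_left le_sup_right)
      have hin : p ⊓ q ∈ m :=
        hmdown _ _ (hmjoin _ _ (hmjoin j j' hj hj') hab) hle
      exact hmP' _ hin hpq
    refine ⟨mᶜ, Or.inr (Or.inr ⟨?_, ?_, ?_, ?_, ?_⟩), ?_, ?_⟩
    · obtain ⟨p, hp⟩ := hPn
      exact ⟨p, fun h => hmP' p h hp⟩
    · intro h
      obtain ⟨n, hn⟩ := hNc
      have : n ∈ mᶜ := h ▸ Set.mem_univ n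
      exact this (hNcm hn)
    · intro a b ha hab hb
      exact ha (hmdown b a hb hab)
    · intro a b ha hb hab
      rcases hprime a b hab with h | h
      exacts [ha h, hb h]
    · intro a b hab
      by_contra hcon
      push_neg at hcon
      simp only [Set.mem_compl_iff, not_not] at hcon
      exact hab (hmjoin a b hcon.1 hcon.2)
    · intro p hp hpm
      exact hmP' p hpm hp
    · intro x hx
      by_contra hxN
      exact hx (hNcm hxN)
  · refine ⟨Set.univ, gpf_univ, Set.subset_univ _, ?_⟩
    rw [Set.not_nonempty_iff_eq_empty, Set.compl_empty_iff] at hNc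
    rw [hNc]

end GPFHelp

section Main
variable {A : Type*}

/-- The carrier of `F^∼`. -/
def tldSet [Lattice A] (S : InFL A) (F : Set A) : Set A := {w | S.rneg w ∉ F}

/-- The carrier of `F^−`. -/
def mnsSet [Lattice A] (S : InFL A) (F : Set A) : Set A := {w | S.lneg w ∉ F}

variable [Lattice A] (S : InFL A)

lemma tldSet_eq_image (F : Set A) : tldSet S F = S.lneg '' Fᶜ := by
  ext w
  constructor
  · intro hw
    exact ⟨S.rneg w, hw, S.lneg_rneg w⟩
  · rintro ⟨a, ha, rfl⟩
    show S.rneg (S.lneg a) ∉ F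
    rwa [S.rneg_lneg]

lemma mnsSet_eq_image (F : Set A) : mnsSet S F = S.rneg '' Fᶜ := by
  ext w
  constructor
  · intro hw
    exact ⟨S.lneg w, hw, S.rneg_lneg w⟩
  · rintro ⟨a, ha, rfl⟩
    show S.lneg (S.rneg a) ∉ F
    rwa [S.lneg_rneg]

lemma mnsSet_tldSet (F : Set A) : mnsSet S (tldSet S F) = F := by
  ext w
  show ¬ (S.rneg (S.lneg w) ∉ F) ↔ w ∈ F
  rw [S.rneg_lneg, not_not]

lemma tldSet_mnsSet (F : Set A) : tldSet S (mnsSet S F) = F := by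
  ext w
  show ¬ (S.lneg (S.rneg w) ∉ F) ↔ w ∈ F
  rw [S.lneg_rneg, not_not]

lemma tldSet_gpf {F : Set A} (h : IsGPF F) : IsGPF (tldSet S F) := by
  rcases h with h | h | ⟨⟨a0, ha0⟩, hne, hup, hinf, hpr⟩
  · subst h
    refine Or.inr (Or.inl ?_)
    ext w; simp [tldSet]
  · subst h
    refine Or.inl ?_
    ext w; simp [tldSet]
  · refine Or.inr (Or.inr ⟨?_, ?_, ?_, ?_, ?_⟩)
    · obtain ⟨b, hb⟩ := Set.ne_univ_iff_exists_notMem F |>.1 hne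
      refine ⟨S.lneg b, ?_⟩
      show S.rneg (S.lneg b) ∉ F
      rwa [S.rneg_lneg]
    · intro h
      have : S.lneg a0 ∈ tldSet S F := h ▸ Set.mem_univ _
      have h2 : S.rneg (S.lneg a0) ∉ F := this
      rw [S.rneg_lneg] at h2
      exact h2 ha0
    · intro a b ha hab hb
      exact ha (hup _ _ hb (S.rneg_le_rneg hab))
    · intro a b ha hb hab
      rw [S.rneg_inf] at hab
      rcases hpr _ _ hab with h | h
      exacts [ha h, hb h]
    · intro a b hab
      by_contra hcon
      push_neg at hcon
      simp only [tldSet, Set.mem_setOf_eq, not_not] at hcon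
      have : S.rneg (a ⊔ b) ∈ F := by
        rw [S.rneg_sup]; exact hinf _ _ hcon.1 hcon.2
      exact hab this

lemma mnsSet_gpf {F : Set A} (h : IsGPF F) : IsGPF (mnsSet S F) := by
  rcases h with h | h | ⟨⟨a0, ha0⟩, hne, hup, hinf, hpr⟩
  · subst h
    refine Or.inr (Or.inl ?_)
    ext w; simp [mnsSet]
  · subst h
    refine Or.inl ?_
    ext w; simp [mnsSet]
  · refine Or.inr (Or.inr ⟨?_, ?_, ?_, ?_, ?_⟩)
    · obtain ⟨b, hb⟩ := Set.ne_univ_iff_exists_notMem F |>.1 hne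
      refine ⟨S.rneg b, ?_⟩
      show S.lneg (S.rneg b) ∉ F
      rwa [S.lneg_rneg]
    · intro h
      have : S.rneg a0 ∈ mnsSet S F := h ▸ Set.mem_univ _
      have h2 : S.lneg (S.rneg a0) ∉ F := this
      rw [S.lneg_rneg] at h2
      exact h2 ha0
    · intro a b ha hab hb
      exact ha (hup _ _ hb (S.lneg_le_lneg hab))
    · intro a b ha hb hab
      rw [S.lneg_inf] at hab
      rcases hpr _ _ hab with h | h
      exacts [ha h, hb h]
    · intro a b hab
      by_contra hcon
      push_neg at hcon
      simp only [mnsSet, Set.mem_setOf_eq, not_not] at hcon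
      have : S.lneg (a ⊔ b) ∈ F := by
        rw [S.lneg_sup]; exact hinf _ _ hcon.1 hcon.2
      exact hab this

end Main

section Exists
variable {A : Type*} [DistribLattice A] (S : InFL A)

lemma exists_gpf_mul_left {z w : Set A} (hz : IsGPF z) (hw : IsGPF w) {P : Set A}
    (hPn : P.Nonempty) (hPinf : ∀ a b, a ∈ P → b ∈ P → a ⊓ b ∈ P)
    (hPN : ∀ p ∈ P, ∀ c ∈ z, S.mul p c ∈ w) :
    ∃ H : Set A, IsGPF H ∧ P ⊆ H ∧ ∀ p ∈ H, ∀ c ∈ z, S.mul p c ∈ w := by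
  set N : Set A := {p | ∀ c ∈ z, S.mul p c ∈ w} with hN
  have hNup : ∀ a b, a ∈ N → a ≤ b → b ∈ N := by
    intro a b ha hab c hc
    exact hw.up (ha c hc) (S.mul_le_mul hab le_rfl)
  have hNjoin : ∀ a b, a ∉ N → b ∉ N → a ⊔ b ∉ N := by
    intro a b ha hb hab
    simp only [hN, Set.mem_setOf_eq, not_forall] at ha hb
    obtain ⟨c, hc, hac⟩ := ha
    obtain ⟨c', hc', hbc⟩ := hb
    have h1 : S.mul (a ⊔ b) (c ⊓ c') ∈ w := hab _ (hz.inf_mem hc hc')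
    have h2 : S.mul a c ⊔ S.mul b c' ∈ w := by
      refine hw.up h1 ?_
      rw [S.mul_sup_left]
      exact sup_le (le_sup_of_le_left (S.mul_le_mul le_rfl inf_le_left))
        (le_sup_of_le_right (S.mul_le_mul le_rfl inf_le_right))
    rcases hw.prime h2 with h | h
    exacts [hac h, hbc h]
  exact exists_gpf_between hPn hPinf (fun p hp => hPN p hp) hNup hNjoin

lemma exists_gpf_mul_right {z w : Set A} (hz : IsGPF z) (hw : IsGPF w) {P : Set A}
    (hPn : P.Nonempty) (hPinf : ∀ a b, a ∈ P → b ∈ P → a ⊓ b ∈ P)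
    (hPN : ∀ p ∈ P, ∀ a ∈ z, S.mul a p ∈ w) :
    ∃ H : Set A, IsGPF H ∧ P ⊆ H ∧ ∀ p ∈ H, ∀ a ∈ z, S.mul a p ∈ w := by
  set N : Set A := {p | ∀ a ∈ z, S.mul a p ∈ w} with hN
  have hNup : ∀ a b, a ∈ N → a ≤ b → b ∈ N := by
    intro a b ha hab c hc
    exact hw.up (ha c hc) (S.mul_le_mul le_rfl hab)
  have hNjoin : ∀ a b, a ∉ N → b ∉ N → a ⊔ b ∉ N := by
    intro a b ha hb hab
    simp only [hN, Set.mem_setOf_eq, not_forall] at ha hb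
    obtain ⟨c, hc, hac⟩ := ha
    obtain ⟨c', hc', hbc⟩ := hb
    have h1 : S.mul (c ⊓ c') (a ⊔ b) ∈ w := hab _ (hz.inf_mem hc hc')
    have h2 : S.mul c a ⊔ S.mul c' b ∈ w := by
      refine hw.up h1 ?_
      rw [S.mul_sup_right]
      exact sup_le (le_sup_of_le_left (S.mul_le_mul inf_le_left le_rfl))
        (le_sup_of_le_right (S.mul_le_mul inf_le_right le_rfl))
    rcases hw.prime h2 with h | h
    exacts [hac h, hbc h]
  exact exists_gpf_between hPn hPinf (fun p hp => hPN p hp) hNup hNjoin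

end Exists


/-- The structure `𝔉(A) = (W_A, 𝓘, ⊆, ∙, ∼, −, ∅, A)` on the generalised prime
filters of a distributive InFL-algebra is a doubly-pointed DInFL-frame:
`(W_A, 𝓘, ⊆, ∙, ∼, −)` is a DInFL-frame with `𝓘 = {F : 1 ∈ F}`,
`H ∈ F∙G ⟺ F·G ⊆ H`, `F^∼ = {∼a : a ∉ F}` and `F^− = {−a : a ∉ F}`; the poset
is bounded with least element `∅` and greatest element `A`, and `𝓘` is a proper
non-empty upset. -/
theorem gpf_doubly_pointed_frame {A : Type*} [DistribLattice A] (S : InFL A) :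
    ∃ Fr : DInFLFrame {F : Set A // IsGPF F},
      Fr.I = {F | S.one ∈ F.1} ∧
      (∀ F G, Fr.le F G ↔ F.1 ⊆ G.1) ∧
      (∀ F G H, H ∈ Fr.comp F G ↔ ∀ a ∈ F.1, ∀ b ∈ G.1, S.mul a b ∈ H.1) ∧
      (∀ F, (Fr.tld F).1 = S.lneg '' F.1ᶜ) ∧
      (∀ F, (Fr.mns F).1 = S.rneg '' F.1ᶜ) ∧
      (∃ bot top : {F : Set A // IsGPF F}, bot.1 = ∅ ∧ top.1 = Set.univ ∧
        ∀ F, Fr.le bot F ∧ Fr.le F top) ∧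
      Fr.I.Nonempty ∧ Fr.I ≠ Set.univ := by
  classical
  refine ⟨{ I := {F | S.one ∈ F.1}
            le := fun F G => F.1 ⊆ G.1
            le_refl := fun F => subset_rfl
            le_trans := fun x y z h1 h2 => h1.trans h2
            le_antisymm := fun x y h1 h2 => Subtype.ext (subset_antisymm h1 h2)
            comp := fun F G => {H | ∀ a ∈ F.1, ∀ b ∈ G.1, S.mul a b ∈ H.1}
            tld := fun F => ⟨tldSet S F.1, tldSet_gpf S F.2⟩
            mns := fun F => ⟨mnsSet S F.1, mnsSet_gpf S F.2⟩
            ax1 := ?_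
            ax2 := fun x y hle hx => hle hx
            ax3 := fun u v x y hxy hx a ha b hb => hxy (hx a ha b hb)
            ax4 := ?_
            ax5 := ?_
            ax6 := ?_ },
        rfl, fun F G => Iff.rfl, fun F G H => Iff.rfl,
        fun F => tldSet_eq_image S F.1, fun F => mnsSet_eq_image S F.1,
        ⟨⟨∅, gpf_empty⟩, ⟨Set.univ, gpf_univ⟩, rfl, rfl,
          fun F => ⟨Set.empty_subset _, Set.subset_univ _⟩⟩,
        ⟨⟨Set.univ, gpf_univ⟩, Set.mem_univ S.one⟩, ?_⟩
  · -- ax1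
    intro x y
    constructor
    · constructor
      · intro h
        have hPN : ∀ p ∈ {p : A | S.one ≤ p}, ∀ c ∈ x.1, S.mul p c ∈ y.1 := by
          intro p hp c hc
          have h1 : c ≤ S.mul p c := by
            have h2 := S.mul_le_mul hp (le_refl c)
            rwa [S.one_mul] at h2
          exact y.2.up (h hc) h1
        obtain ⟨H, hH, hPH, hcond⟩ := exists_gpf_mul_left S x.2 y.2
          (P := {p | S.one ≤ p}) ⟨S.one, le_rfl⟩
          (fun a b ha hb => le_inf ha hb) hPN
        exact ⟨⟨H, hH⟩, hPH le_rfl, x, rfl, fun a ha b hb => hcond a ha b hb⟩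
      · rintro ⟨u, huI, v, rfl, hcomp⟩
        intro b hb
        have h := hcomp S.one huI b hb
        rwa [S.one_mul] at h
    · constructor
      · intro h
        have hPN : ∀ p ∈ {p : A | S.one ≤ p}, ∀ a ∈ x.1, S.mul a p ∈ y.1 := by
          intro p hp a ha
          have h1 : a ≤ S.mul a p := by
            have h2 := S.mul_le_mul (le_refl a) hp
            rwa [S.mul_one] at h2
          exact y.2.up (h ha) h1
        obtain ⟨H, hH, hPH, hcond⟩ := exists_gpf_mul_right S x.2 y.2
          (P := {p | S.one ≤ p}) ⟨S.one, le_rfl⟩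
          (fun a b ha hb => le_inf ha hb) hPN
        exact ⟨x, rfl, ⟨H, hH⟩, hPH le_rfl, fun a ha b hb => hcond b hb a ha⟩
      · rintro ⟨u, rfl, v, hvI, hcomp⟩
        intro b hb
        have h := hcomp b hb S.one hvI
        rwa [S.mul_one] at h
  · -- ax4
    intro x y z
    ext w
    constructor
    · rintro ⟨h, hh, z', rfl, hcomp⟩
      have T : ∀ a ∈ x.1, ∀ b ∈ y.1, ∀ c ∈ z'.1, S.mul a (S.mul b c) ∈ w.1 := by
        intro a ha b hb c hc
        rw [← S.mul_assoc]
        exact hcomp _ (hh a ha b hb) c hc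
      by_cases hy : y.1.Nonempty
      · by_cases hz : z'.1.Nonempty
        · obtain ⟨b0, hb0⟩ := hy
          obtain ⟨c0, hc0⟩ := hz
          have hPinf : ∀ e e', e ∈ {e : A | ∃ b ∈ y.1, ∃ c ∈ z'.1, S.mul b c ≤ e} →
              e' ∈ {e : A | ∃ b ∈ y.1, ∃ c ∈ z'.1, S.mul b c ≤ e} →
              e ⊓ e' ∈ {e : A | ∃ b ∈ y.1, ∃ c ∈ z'.1, S.mul b c ≤ e} := by
            rintro e e' ⟨b, hb, c, hc, hbc⟩ ⟨b', hb', c', hc', hbc'⟩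
            refine ⟨b ⊓ b', y.2.inf_mem hb hb', c ⊓ c', z'.2.inf_mem hc hc', le_inf ?_ ?_⟩
            · exact (S.mul_le_mul inf_le_left inf_le_left).trans hbc
            · exact (S.mul_le_mul inf_le_right inf_le_right).trans hbc'
          have hPN : ∀ p ∈ {e : A | ∃ b ∈ y.1, ∃ c ∈ z'.1, S.mul b c ≤ e},
              ∀ a ∈ x.1, S.mul a p ∈ w.1 := by
            rintro p ⟨b, hb, c, hc, hbc⟩ a ha
            exact w.2.up (T a ha b hb c hc) (S.mul_le_mul le_rfl hbc)
          obtain ⟨K, hK, hPK, hcond⟩ := exists_gpf_mul_right S x.2 w.2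
            (P := {e | ∃ b ∈ y.1, ∃ c ∈ z'.1, S.mul b c ≤ e})
            ⟨S.mul b0 c0, b0, hb0, c0, hc0, le_rfl⟩ hPinf hPN
          exact ⟨x, rfl, ⟨K, hK⟩,
              (fun b hb c hc => hPK ⟨b, hb, c, hc, le_rfl⟩),
              fun a ha d hd => hcond d hd a ha⟩
        · rw [Set.not_nonempty_iff_eq_empty] at hz
          refine ⟨x, rfl, ⟨∅, gpf_empty⟩, ?_, ?_⟩
          · intro b hb c hc
            rw [hz] at hc
            exact hc.elim
          · intro a ha d hd
            exact hd.elim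
      · rw [Set.not_nonempty_iff_eq_empty] at hy
        refine ⟨x, rfl, ⟨∅, gpf_empty⟩, ?_, ?_⟩
        · intro b hb c hc
          rw [hy] at hb
          exact hb.elim
        · intro a ha d hd
          exact hd.elim
    · rintro ⟨x', rfl, k, hk, hcomp⟩
      have T : ∀ a ∈ x'.1, ∀ b ∈ y.1, ∀ c ∈ z.1, S.mul (S.mul a b) c ∈ w.1 := by
        intro a ha b hb c hc
        rw [S.mul_assoc]
        exact hcomp a ha _ (hk b hb c hc)
      by_cases hx : x'.1.Nonempty
      · by_cases hy : y.1.Nonempty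
        · obtain ⟨a0, ha0⟩ := hx
          obtain ⟨b0, hb0⟩ := hy
          have hPinf : ∀ e e', e ∈ {e : A | ∃ a ∈ x'.1, ∃ b ∈ y.1, S.mul a b ≤ e} →
              e' ∈ {e : A | ∃ a ∈ x'.1, ∃ b ∈ y.1, S.mul a b ≤ e} →
              e ⊓ e' ∈ {e : A | ∃ a ∈ x'.1, ∃ b ∈ y.1, S.mul a b ≤ e} := by
            rintro e e' ⟨a, ha, b, hb, hab⟩ ⟨a', ha', b', hb', hab'⟩
            refine ⟨a ⊓ a', x'.2.inf_mem ha ha', b ⊓ b', y.2.inf_mem hb hb', le_inf ?_ ?_⟩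
            · exact (S.mul_le_mul inf_le_left inf_le_left).trans hab
            · exact (S.mul_le_mul inf_le_right inf_le_right).trans hab'
          have hPN : ∀ p ∈ {e : A | ∃ a ∈ x'.1, ∃ b ∈ y.1, S.mul a b ≤ e},
              ∀ c ∈ z.1, S.mul p c ∈ w.1 := by
            rintro p ⟨a, ha, b, hb, hab⟩ c hc
            exact w.2.up (T a ha b hb c hc) (S.mul_le_mul hab le_rfl)
          obtain ⟨H, hH, hPH, hcond⟩ := exists_gpf_mul_left S z.2 w.2
            (P := {e | ∃ a ∈ x'.1, ∃ b ∈ y.1, S.mul a b ≤ e})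
            ⟨S.mul a0 b0, a0, ha0, b0, hb0, le_rfl⟩ hPinf hPN
          exact ⟨⟨H, hH⟩,
              (fun a ha b hb => hPH ⟨a, ha, b, hb, le_rfl⟩), z, rfl,
              fun p hp c hc => hcond p hp c hc⟩
        · rw [Set.not_nonempty_iff_eq_empty] at hy
          refine ⟨⟨∅, gpf_empty⟩, ?_, z, rfl, ?_⟩
          · intro a ha b hb
            rw [hy] at hb
            exact hb.elim
          · intro p hp c hc
            exact hp.elim
      · rw [Set.not_nonempty_iff_eq_empty] at hx
        refine ⟨⟨∅, gpf_empty⟩, ?_, z, rfl, ?_⟩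
        · intro a ha b hb
          rw [hx] at ha
          exact ha.elim
        · intro p hp c hc
          exact hp.elim
  · -- ax5
    intro x y z
    constructor
    · intro h c hc a ha
      intro hby
      have hmem := h a ha _ hby
      have hle : c ≤ S.rneg (S.mul a (S.lneg (S.mul c a))) :=
        (S.res_left c a (S.mul c a)).1 le_rfl
      exact hmem (z.2.up hc hle)
    · intro h a ha b hb
      intro hcz
      have hmem := h _ hcz a ha
      have hle : b ≤ S.lneg (S.mul (S.rneg (S.mul a b)) a) :=
        (S.res_right a b (S.mul a b)).1 le_rfl
      exact hmem (y.2.up hb hle)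
  · -- ax6
    intro x
    constructor
    · show mnsSet S (tldSet S x.1) ⊆ x.1
      rw [mnsSet_tldSet]
    · show tldSet S (mnsSet S x.1) ⊆ x.1
      rw [tldSet_mnsSet]
  · -- I ≠ univ
    intro h
    have h2 : (⟨∅, gpf_empty⟩ : {F : Set A // IsGPF F}) ∈ (Set.univ : Set _) :=
      Set.mem_univ _
    rw [← h] at h2
    exact h2
end
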